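/- Let A be a nonzero m×m real symmetric positive semidefinite matrix with Moore–Penrose inverse A†, let α be a real scalar, and define the Newton–Raphson iterates A₀ = α A, A_{k+1} = 2 A_k − A_k A A_k. If the spectral norm satisfies ‖A A† − α A²‖ < 1, then the sequence A_k converges to A† (i.e. ‖A_k − A†‖ → 0 as k → ∞). -/

import Mathlib

open Matrix Filter

/-- The spectral norm (ℓ²-operator norm) of a real square matrix. -/
noncomputable def specNorm {m : ℕ} (M : Matrix (Fin m) (Fin m) ℝ) : ℝ :=
  ‖Matrix.toEuclideanCLM (𝕜 := ℝ) M‖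

lemma specNorm_mul_le {m : ℕ} (M N : Matrix (Fin m) (Fin m) ℝ) :
    specNorm (M * N) ≤ specNorm M * specNorm N := by
  unfold specNorm
  rw [_root_.map_mul]
  exact norm_mul_le _ _

lemma specNorm_sub_comm {m : ℕ} (M N : Matrix (Fin m) (Fin m) ℝ) :
    specNorm (M - N) = specNorm (N - M) := by
  unfold specNorm
  rw [← norm_neg, ← map_neg, neg_sub]

/-- `Ad` is the Moore–Penrose inverse of `A`: the Penrose equations
`A Ad A = A`, `Ad A Ad = Ad`, `(A Ad)ᵀ = A Ad`, `(Ad A)ᵀ = Ad A`. -/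
def IsMoorePenroseInv {m n : ℕ} (A : Matrix (Fin m) (Fin n) ℝ)
    (Ad : Matrix (Fin n) (Fin m) ℝ) : Prop :=
  A * Ad * A = A ∧ Ad * A * Ad = Ad ∧ (A * Ad)ᵀ = A * Ad ∧ (Ad * A)ᵀ = Ad * A

/-- If `A` is a nonzero real symmetric positive semidefinite matrix with
Moore–Penrose inverse `Ad`, the Newton–Raphson iterates are `N 0 = α • A`,
`N (k+1) = 2 N k - N k A N k`, and the spectral norm satisfies
`‖A Ad - α A²‖ < 1`, then `N k` converges to `Ad`. -/
theorem newton_raphson_tendsto_moorePenroseInv {m : ℕ}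
    (A Ad : Matrix (Fin m) (Fin m) ℝ)
    (hA : A.PosSemidef) (hA0 : A ≠ 0)
    (hMP : IsMoorePenroseInv A Ad)
    (α : ℝ) (N : ℕ → Matrix (Fin m) (Fin m) ℝ)
    (hN0 : N 0 = α • A)
    (hNrec : ∀ k, N (k + 1) = (2 : ℝ) • N k - N k * A * N k)
    (hinit : specNorm (A * Ad - α • (A * A)) < 1) :
    Tendsto (fun k => specNorm (N k - Ad)) atTop (nhds 0) := by

  obtain ⟨h1, h2, h3, h4⟩ := hMP
  have hAs : Aᵀ = A := by
    have := hA.isHermitian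
    rwa [Matrix.IsHermitian, conjTranspose_eq_transpose_of_trivial] at this
  have hAAAd : A * (A * Ad) = A := by
    calc A * (A * Ad) = Aᵀ * (A * Ad)ᵀ := by rw [hAs, h3]
      _ = (A * Ad * A)ᵀ := (transpose_mul _ _).symm
      _ = A := by rw [h1, hAs]
  have hAdAA : Ad * (A * A) = A := by
    calc Ad * (A * A) = (Ad * A) * A := by rw [mul_assoc]
      _ = (Ad * A)ᵀ * Aᵀ := by rw [h4, hAs]
      _ = (A * (Ad * A))ᵀ := (transpose_mul _ _).symm
      _ = A := by rw [← mul_assoc, h1, hAs]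
  have h2' : Ad * (A * Ad) = Ad := by rw [← mul_assoc, h2]
  -- invariance of iterates
  have hR : ∀ k, N k * (A * Ad) = N k ∧ Ad * (A * N k) = N k := by
    intro k
    induction k with
    | zero =>
      rw [hN0]
      constructor
      · rw [smul_mul_assoc, hAAAd]
      · rw [mul_smul_comm, mul_smul_comm, ← mul_assoc, mul_assoc, hAdAA]
    | succ k ih =>
      obtain ⟨ih1, ih2⟩ := ih
      rw [hNrec k]
      constructor
      · simp only [sub_mul, smul_mul_assoc, mul_assoc, ih1]
      · have ih2L : Ad * A * N k = N k := by rw [mul_assoc, ih2]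
        rw [← mul_assoc]
        simp only [mul_sub, mul_smul_comm, ← mul_assoc, ih2L]
  -- key recursion for the error
  have hE : ∀ k, Ad - N (k + 1) = (Ad - N k) * A * (Ad - N k) := by
    intro k
    obtain ⟨ih1, ih2⟩ := hR k
    rw [hNrec k]
    have expand : (Ad - N k) * A * (Ad - N k)
        = Ad * (A * Ad) - N k * (A * Ad) - (Ad * (A * N k) - N k * (A * N k)) := by
      simp only [sub_mul, mul_sub, mul_assoc]
    rw [expand, h2', ih1, ih2, mul_assoc (N k) A (N k)]
    module
  -- F k = A * (Ad - N k)
  set F : ℕ → Matrix (Fin m) (Fin m) ℝ := fun k => A * (Ad - N k) with hFdef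
  have hFrec : ∀ k, F (k + 1) = F k * F k := by
    intro k
    simp only [hFdef, hE k, mul_assoc]
  have hF0 : F 0 = A * Ad - α • (A * A) := by
    simp only [hFdef, hN0, mul_sub, mul_smul_comm]
  have hEF : ∀ k, Ad - N k = Ad * F k := by
    intro k
    obtain ⟨ih1, ih2⟩ := hR k
    simp only [hFdef, mul_sub, h2', ih2]
  set r : ℝ := specNorm (F 0) with hr
  have hr0 : 0 ≤ r := norm_nonneg _
  have hr1 : r < 1 := by rwa [hr, hF0]
  have hFle : ∀ k, specNorm (F k) ≤ r ^ (2 ^ k) := by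
    intro k
    induction k with
    | zero => simp [hr]
    | succ k ih =>
      calc specNorm (F (k + 1)) = specNorm (F k * F k) := by rw [hFrec]
        _ ≤ specNorm (F k) * specNorm (F k) := specNorm_mul_le _ _
        _ ≤ r ^ (2 ^ k) * r ^ (2 ^ k) := by
            exact mul_le_mul ih ih (norm_nonneg _) (pow_nonneg hr0 _)
        _ = r ^ (2 ^ (k + 1)) := by rw [← pow_add]; ring_nf
  have hle : ∀ k, specNorm (N k - Ad) ≤ specNorm Ad * r ^ (2 ^ k) := by
    intro k
    rw [specNorm_sub_comm, hEF k]
    calc specNorm (Ad * F k) ≤ specNorm Ad * specNorm (F k) := specNorm_mul_le _ _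
      _ ≤ specNorm Ad * r ^ (2 ^ k) :=
          mul_le_mul_of_nonneg_left (hFle k) (norm_nonneg _)
  have htend : Tendsto (fun k : ℕ => specNorm Ad * r ^ (2 ^ k)) atTop (nhds 0) := by
    have h1' : Tendsto (fun n : ℕ => r ^ n) atTop (nhds 0) :=
      tendsto_pow_atTop_nhds_zero_of_lt_one hr0 hr1
    have h2' : Tendsto (fun k : ℕ => 2 ^ k) atTop atTop :=
      tendsto_pow_atTop_atTop_of_one_lt (by norm_num)
    have := (h1'.comp h2').const_mul (specNorm Ad)
    simpa using this
  exact squeeze_zero (fun k => norm_nonneg _) hle htend
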